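/- There is no polynomial P ∈ ℂ[u,v] (equivalently, no P in MvPolynomial (Fin 2) ℂ) such that for all u, v ∈ ℂ with uv ≠ 1, uv ≠ −1 and (uv)⁵ ≠ 1 one has P(u,v) = [(1−u²v)³(1−uv²)³ − (uv)⁴(1−u)³(1−v)³]/[(1−uv)(1−(uv)²)] − ((uv)²/2)·[(1−u)³(1−v)³/(1−uv) − (1+u)³(1+v)³/(1+uv)] + 64·(uv)⁵·(1+uv+(uv)²)(1+(uv)²)·((uv−1)/((uv)⁵−1))². -/

import Mathlib

open Polynomial

/-- The stringy E-function of Theorem 1.1 is not a polynomial: there is no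
polynomial P ∈ ℂ[u,v] agreeing with it wherever it is defined. -/
theorem Est_not_polynomial :
    ¬ ∃ P : MvPolynomial (Fin 2) ℂ, ∀ u v : ℂ,
      u * v ≠ 1 → u * v ≠ -1 → (u * v) ^ 5 ≠ 1 →
      MvPolynomial.eval ![u, v] P =
        ((1 - u ^ 2 * v) ^ 3 * (1 - u * v ^ 2) ^ 3
            - (u * v) ^ 4 * (1 - u) ^ 3 * (1 - v) ^ 3)
          / ((1 - u * v) * (1 - (u * v) ^ 2))
        - (u * v) ^ 2 / 2 *
            ((1 - u) ^ 3 * (1 - v) ^ 3 / (1 - u * v)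
              - (1 + u) ^ 3 * (1 + v) ^ 3 / (1 + u * v))
        + 64 * (u * v) ^ 5 * (1 + u * v + (u * v) ^ 2) * (1 + (u * v) ^ 2)
            * ((u * v - 1) / ((u * v) ^ 5 - 1)) ^ 2 := by
  rintro ⟨P, hP⟩
  -- restrict to the line v = 1
  set p : Polynomial ℂ := MvPolynomial.aeval ![Polynomial.X, 1] P with hp
  have key : ∀ u : ℂ, Polynomial.eval u p = MvPolynomial.eval ![u, 1] P := by
    intro u
    rw [hp, show Polynomial.eval u (MvPolynomial.aeval ![Polynomial.X, 1] P)
        = Polynomial.aeval u (MvPolynomial.aeval ![Polynomial.X, 1] P) from rfl,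
      MvPolynomial.comp_aeval_apply]
    have hf : (fun i => (Polynomial.aeval u : Polynomial ℂ →ₐ[ℂ] ℂ) (![Polynomial.X, 1] i))
        = (![u, 1] : Fin 2 → ℂ) := by
      funext i; fin_cases i <;> simp
    rw [hf, MvPolynomial.aeval_def, MvPolynomial.eval]
    rfl
  -- the cleared-denominator polynomial identity
  set d : Polynomial ℂ :=
    (1 - X) * (1 - X ^ 2) * (1 + X) * (X ^ 5 - 1) ^ 2 with hd
  set r : Polynomial ℂ :=
    (1 - X ^ 2) ^ 3 * (1 - X) ^ 3 * (1 + X) * (X ^ 5 - 1) ^ 2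
      + 4 * X ^ 2 * (1 + X) ^ 3 * (1 - X) * (1 - X ^ 2) * (X ^ 5 - 1) ^ 2
      + 64 * X ^ 5 * (1 + X + X ^ 2) * (1 + X ^ 2) * (X - 1) ^ 2
          * (1 - X) * (1 - X ^ 2) * (1 + X) with hr
  have hroot : ∀ u : ℂ, u ≠ 1 → u ≠ -1 → u ^ 5 ≠ 1 →
      Polynomial.eval u (p * d - r) = 0 := by
    intro u h1 h2 h5
    have hu1 : (1 : ℂ) - u ≠ 0 := sub_ne_zero.mpr (Ne.symm h1)
    have hu2 : (1 : ℂ) + u ≠ 0 := by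
      intro h; apply h2; linear_combination h
    have hu3 : (1 : ℂ) - u ^ 2 ≠ 0 := by
      intro h; rcases mul_eq_zero.mp (show (1 - u) * (1 + u) = 0 by linear_combination h) with
        h' | h'
      · exact hu1 h'
      · exact hu2 h'
    have hu5 : u ^ 5 - 1 ≠ 0 := sub_ne_zero.mpr h5
    have h := hP u 1 (by simpa using h1) (by simpa using h2) (by simpa using h5)
    rw [← key] at h
    simp only [Polynomial.eval_sub, Polynomial.eval_mul, Polynomial.eval_add,
      Polynomial.eval_pow, Polynomial.eval_one, Polynomial.eval_X,
      Polynomial.eval_ofNat, hd, hr]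
    rw [h]
    field_simp
    ring
  -- the equality holds off a finite set, hence everywhere
  have hfin : ({x : ℂ | x = 1 ∨ x = -1 ∨ x ^ 5 = 1}).Finite := by
    have h1 : {x : ℂ | x ^ 5 = 1}.Finite := by
      have := Polynomial.finite_setOf_isRoot (R := ℂ) (p := X ^ 5 - 1) (by
        intro h
        have := congrArg (Polynomial.eval 2) h
        simp at this
        norm_num at this)
      apply this.subset
      intro x hx
      simp [Polynomial.IsRoot, sub_eq_zero]
      exact hx
    exact (((Set.finite_singleton (1 : ℂ)).union (Set.finite_singleton (-1 : ℂ))).union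
      h1).subset (by intro x hx; simp only [Set.mem_union, Set.mem_singleton_iff, Set.mem_setOf_eq] at hx ⊢; tauto)
  have hzero : p * d - r = 0 := by
    apply Polynomial.eq_zero_of_infinite_isRoot
    apply Set.Infinite.mono _ hfin.infinite_compl
    intro x hx
    simp only [Set.mem_compl_iff, Set.mem_setOf_eq, not_or] at hx
    exact hroot x hx.1 hx.2.1 hx.2.2
  -- evaluate at a primitive 5th root of unity
  have hζ := Complex.isPrimitiveRoot_exp 5 (by norm_num)
  set ζ : ℂ := Complex.exp (2 * Real.pi * Complex.I / 5) with hζdef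
  have hζ5 : ζ ^ 5 = 1 := hζ.pow_eq_one
  have hζ1 : ζ ≠ 1 := by
    intro h; exact (hζ.pow_ne_one_of_pos_of_lt (l := 1) one_ne_zero (by norm_num)) (by simpa using h)
  have hζ2 : ζ ^ 2 ≠ 1 := hζ.pow_ne_one_of_pos_of_lt (by norm_num) (by norm_num)
  have hζ3 : ζ ^ 3 ≠ 1 := hζ.pow_ne_one_of_pos_of_lt (by norm_num) (by norm_num)
  have hζ4 : ζ ^ 4 ≠ 1 := hζ.pow_ne_one_of_pos_of_lt (by norm_num) (by norm_num)
  have hev := congrArg (Polynomial.eval ζ) hzero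
  simp only [Polynomial.eval_sub, Polynomial.eval_mul, Polynomial.eval_add,
    Polynomial.eval_pow, Polynomial.eval_one, Polynomial.eval_X,
    Polynomial.eval_ofNat, Polynomial.eval_zero, hd, hr] at hev
  rw [hζ5] at hev
  -- hev : p(ζ) * 0 - (0 + 0 + nonzero) = 0
  have hA : (1 : ℂ) - ζ ≠ 0 := sub_ne_zero.mpr (Ne.symm hζ1)
  have hB : (1 : ℂ) + ζ ≠ 0 := by
    intro h
    have : ζ = -1 := by linear_combination h
    rw [this] at hζ5; norm_num at hζ5
  have hC : (1 : ℂ) - ζ ^ 2 ≠ 0 := sub_ne_zero.mpr (Ne.symm hζ2)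
  have hD : (1 : ℂ) + ζ ^ 2 ≠ 0 := by
    intro h
    apply hζ4
    have : ζ ^ 2 = -1 := by linear_combination h
    rw [show ζ ^ 4 = (ζ ^ 2) ^ 2 by ring, this]; norm_num
  have hE : (1 : ℂ) + ζ + ζ ^ 2 ≠ 0 := by
    intro h
    apply hζ3
    have : ζ ^ 3 - 1 = (ζ - 1) * (1 + ζ + ζ ^ 2) := by ring
    have h3 : ζ ^ 3 - 1 = 0 := by rw [this, h]; ring
    linear_combination h3
  have hzne : ζ ≠ 0 := by
    intro h; rw [h] at hζ5; norm_num at hζ5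
  have hne : (64 : ℂ) * (1 + ζ + ζ ^ 2) * (1 + ζ ^ 2) * (ζ - 1) ^ 2
      * (1 - ζ) * (1 - ζ ^ 2) * (1 + ζ) ≠ 0 := by
    apply mul_ne_zero
    apply mul_ne_zero
    apply mul_ne_zero
    apply mul_ne_zero
    apply mul_ne_zero
    apply mul_ne_zero
    · norm_num
    · exact hE
    · exact hD
    · exact pow_ne_zero _ (sub_ne_zero.mpr hζ1)
    · exact hA
    · exact hC
    · exact hB
  apply hne
  linear_combination -hev
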